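/- Let G be a group and let A be a set. Equip A^G with the prodiscrete uniform structure and the shift action of G, and let X ⊂ A^G be a G-invariant subset. Then X is strongly irreducible if and only if the shift action of G on X (with the induced uniform structure) has the weak specification property. -/

import Mathlib

open scoped Pointwise Uniformity

/-- The shift action of `G` on `A^G`, namely `(g • x)(h) = x (g⁻¹ h)`. -/
def shift {G A : Type*} [Group G] (g : G) (x : G → A) : G → A := fun h => x (g⁻¹ * h)

/-- A subset `X ⊆ A^G` is strongly irreducible if there is a finite `Δ ⊆ G` such that
configurations of `X` prescribed on finite sets `Ω₁, Ω₂` with `Ω₁ ∩ Ω₂Δ = ∅` can be glued. -/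
def StronglyIrreducible {G A : Type*} [Group G] (X : Set (G → A)) : Prop :=
  ∃ Δ : Finset G, ∀ Ω₁ Ω₂ : Finset G,
    Disjoint (Ω₁ : Set G) ((Ω₂ : Set G) * (Δ : Set G)) →
    ∀ x₁ ∈ X, ∀ x₂ ∈ X, ∃ x ∈ X, (∀ g ∈ Ω₁, x g = x₁ g) ∧ (∀ g ∈ Ω₂, x g = x₂ g)

/-- The weak specification property for a (not necessarily instance-given) action
`act : G → X → X` with respect to a uniformity filter `u` on `X × X`. -/
def WeakSpecificationOn {G X : Type*} [Group G] (u : Filter (X × X)) (act : G → X → X) : Prop :=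
  ∀ U ∈ u, ∃ Λ : Finset G,
    ∀ (ι : Type) (_ : Finite ι) (_ : Nonempty ι) (Ω : ι → Finset G) (x : ι → X),
      (∀ j k : ι, j ≠ k → Disjoint ((Ω j : Set G)) ((Λ : Set G) * (Ω k : Set G))) →
      ∃ y : X, ∀ i : ι, ∀ g ∈ Ω i, (act g y, act g (x i)) ∈ U

lemma mem_uniformity_pi_bot {G A : Type*} [uA : UniformSpace A] (hdisc : uA = ⊥)
    (X : Set (G → A)) (U : Set (↥X × ↥X)) :
    U ∈ 𝓤 ↥X ↔ ∃ Ω : Finset G,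
      {p : ↥X × ↥X | ∀ g ∈ Ω, (p.1 : G → A) g = (p.2 : G → A) g} ⊆ U := by
  have hA : (𝓤 A) = Filter.principal SetRel.id := by
    rw [show (𝓤 A) = 𝓤[uA] from rfl, hdisc, bot_uniformity]
  rw [uniformity_subtype, Filter.mem_comap]
  constructor
  · rintro ⟨V, hV, hVU⟩
    rw [Pi.uniformity] at hV
    rcases Filter.mem_iInf.1 hV with ⟨I, Ifin, W, hW, rfl⟩
    refine ⟨Ifin.toFinset, fun p hp => hVU ?_⟩
    simp only [Set.mem_preimage, Set.mem_iInter]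
    intro g
    have := hW g
    rw [hA, Filter.mem_comap] at this
    rcases this with ⟨S, hS, hSW⟩
    apply hSW
    have : ((p.1 : G → A) g, (p.2 : G → A) g) ∈ SetRel.id := by
      simp only [SetRel.mem_id]
      exact hp g.1 (Ifin.mem_toFinset.2 g.2)
    exact Filter.mem_principal.1 hS this
  · rintro ⟨Ω, hΩ⟩
    refine ⟨⋂ g ∈ (Ω : Set G), {p : (G → A) × (G → A) | p.1 g = p.2 g}, ?_, ?_⟩
    · apply (Filter.biInter_mem Ω.finite_toSet).2
      intro g _
      rw [Pi.uniformity]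
      apply Filter.mem_iInf_of_mem g
      rw [hA]
      exact Filter.preimage_mem_comap (Filter.mem_principal_self _)
    · intro p hp
      apply hΩ
      simp only [Set.mem_preimage, Set.mem_iInter, Set.mem_setOf_eq] at hp ⊢
      exact hp

lemma glue_finset {G A : Type*} [Group G] {X : Set (G → A)} {Δ : Finset G}
    (hΔ : ∀ Ω₁ Ω₂ : Finset G,
      Disjoint (Ω₁ : Set G) ((Ω₂ : Set G) * (Δ : Set G)) →
      ∀ x₁ ∈ X, ∀ x₂ ∈ X, ∃ x ∈ X, (∀ g ∈ Ω₁, x g = x₁ g) ∧ (∀ g ∈ Ω₂, x g = x₂ g))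
    {ι : Type} (s : Finset ι) (Ω : ι → Finset G) (x : ι → ↥X)
    (hdisj : ∀ j k, j ≠ k → Disjoint ((Ω j : Set G)) ((Ω k : Set G) * (Δ : Set G)))
    (hX : X.Nonempty) :
    ∃ y ∈ X, ∀ i ∈ s, ∀ g ∈ Ω i, y g = (x i : G → A) g := by
  classical
  induction s using Finset.induction_on with
  | empty => exact ⟨hX.choose, hX.choose_spec, by simp⟩
  | @insert a s ha ih =>
    obtain ⟨y, hyX, hy⟩ := ih
    have hDD : Disjoint ((s.biUnion Ω : Finset G) : Set G) ((Ω a : Set G) * (Δ : Set G)) := by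
      rw [Finset.coe_biUnion]
      refine Set.disjoint_left.2 ?_
      rintro g hg hg'
      simp only [Set.mem_iUnion] at hg
      obtain ⟨i, hi, hgi⟩ := hg
      exact Set.disjoint_left.1 (hdisj i a (fun h => ha (h ▸ hi))) hgi hg'
    obtain ⟨z, hzX, hz1, hz2⟩ := hΔ (s.biUnion Ω) (Ω a) hDD y hyX (x a) (x a).2
    refine ⟨z, hzX, fun i hi g hg => ?_⟩
    rcases Finset.mem_insert.1 hi with rfl | hi
    · exact hz2 g hg
    · rw [hz1 g (Finset.mem_biUnion.2 ⟨i, hi, hg⟩), hy i hi g hg]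

/-- A `G`-invariant subset `X ⊆ A^G` (with the prodiscrete uniform structure on `A^G` and
the shift action of `G`) is strongly irreducible if and only if the shift action of `G`
on `X` has the weak specification property. -/
theorem stronglyIrreducible_iff_weakSpecification {G A : Type*} [Group G]
    [uA : UniformSpace A] (hdisc : uA = ⊥)
    (X : Set (G → A)) (hinv : ∀ (g : G), ∀ x ∈ X, shift g x ∈ X) :
    StronglyIrreducible X ↔
      WeakSpecificationOn (𝓤 ↥X)
        (fun g (x : ↥X) => (⟨shift g ↑x, hinv g ↑x x.2⟩ : ↥X)) := by
  classical
  constructor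
  · rintro ⟨Δ, hΔ⟩ U hU
    obtain ⟨Ω₀, hΩ₀⟩ := (mem_uniformity_pi_bot hdisc X U).1 hU
    refine ⟨Ω₀ * Δ⁻¹ * Ω₀⁻¹, ?_⟩
    intro ι hfin hne Ω x hdis
    have := Fintype.ofFinite ι
    have hX : X.Nonempty := ⟨x (Classical.arbitrary ι), (x (Classical.arbitrary ι)).2⟩
    have hdisj : ∀ j k : ι, j ≠ k →
        Disjoint (((Ω j)⁻¹ * Ω₀ : Finset G) : Set G)
          ((((Ω k)⁻¹ * Ω₀ : Finset G) : Set G) * (Δ : Set G)) := by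
      intro j k hjk
      refine Set.disjoint_left.2 ?_
      rintro t ht ht'
      rw [Set.mem_mul] at ht'
      obtain ⟨s1, hs1, e, he, heq⟩ := ht'
      rw [Finset.mem_coe, Finset.mem_mul] at ht hs1
      obtain ⟨ai, hai, b, hb, rfl⟩ := ht
      obtain ⟨a, ha, rfl⟩ := Finset.mem_inv.1 hai
      obtain ⟨ci, hci, d, hd, rfl⟩ := hs1
      obtain ⟨c, hc, rfl⟩ := Finset.mem_inv.1 hci
      rw [Finset.mem_coe] at he
      have haeq : a = ((b * e⁻¹) * d⁻¹) * c := by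
        have h3 : a * ((c⁻¹ * d) * e) = a * (a⁻¹ * b) := by rw [heq]
        rw [← mul_assoc a a⁻¹ b, mul_inv_cancel, one_mul] at h3
        have h4 : a = b * ((c⁻¹ * d) * e)⁻¹ := by rw [← h3]; group
        rw [h4]; group
      refine Set.disjoint_left.1 (hdis j k hjk) ha (Set.mem_mul.2 ?_)
      refine ⟨(b * e⁻¹) * d⁻¹, Finset.mem_coe.2 ?_, c, Finset.mem_coe.2 hc, haeq.symm⟩
      exact Finset.mul_mem_mul
        (Finset.mul_mem_mul hb (Finset.inv_mem_inv he)) (Finset.inv_mem_inv hd)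
    obtain ⟨y, hyX, hy⟩ := glue_finset hΔ Finset.univ (fun i => (Ω i)⁻¹ * Ω₀) x hdisj hX
    refine ⟨⟨y, hyX⟩, fun i g hg => ?_⟩
    apply hΩ₀
    intro h hh
    show shift g y h = shift g (x i : G → A) h
    simp only [shift]
    exact hy i (Finset.mem_univ i) (g⁻¹ * h)
      (Finset.mul_mem_mul (Finset.inv_mem_inv hg) hh)
  · intro hws
    set U : Set (↥X × ↥X) := {p | (p.1 : G → A) 1 = (p.2 : G → A) 1} with hUdef
    have hU : U ∈ 𝓤 ↥X := by
      refine (mem_uniformity_pi_bot hdisc X U).2 ⟨{1}, fun p hp => ?_⟩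
      exact hp 1 (Finset.mem_singleton_self 1)
    obtain ⟨Λ, hΛ⟩ := hws U hU
    refine ⟨Λ ∪ Λ⁻¹, ?_⟩
    intro Ω₁ Ω₂ hdis x₁ hx₁ x₂ hx₂
    have case1 : Disjoint ((Ω₁⁻¹ : Finset G) : Set G)
        ((Λ : Set G) * ((Ω₂⁻¹ : Finset G) : Set G)) := by
      refine Set.disjoint_left.2 ?_
      intro t ht ht'
      rw [Set.mem_mul] at ht'
      obtain ⟨l, hl, ci, hci, heq⟩ := ht'
      rw [Finset.mem_coe] at ht hci hl
      obtain ⟨a, ha, rfl⟩ := Finset.mem_inv.1 ht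
      obtain ⟨c, hc, rfl⟩ := Finset.mem_inv.1 hci
      have haeq : a = c * l⁻¹ := by
        rw [← inv_inv a, ← heq, mul_inv_rev, inv_inv]
      refine Set.disjoint_left.1 hdis ha (Set.mem_mul.2 ?_)
      refine ⟨c, Finset.mem_coe.2 hc, l⁻¹, Finset.mem_coe.2 ?_, haeq.symm⟩
      exact Finset.mem_union_right _ (Finset.inv_mem_inv hl)
    have case2 : Disjoint ((Ω₂⁻¹ : Finset G) : Set G)
        ((Λ : Set G) * ((Ω₁⁻¹ : Finset G) : Set G)) := by
      refine Set.disjoint_left.2 ?_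
      intro t ht ht'
      rw [Set.mem_mul] at ht'
      obtain ⟨l, hl, ci, hci, heq⟩ := ht'
      rw [Finset.mem_coe] at ht hci hl
      obtain ⟨a, ha, rfl⟩ := Finset.mem_inv.1 ht
      obtain ⟨c, hc, rfl⟩ := Finset.mem_inv.1 hci
      have h1 : a = c * l⁻¹ := by
        rw [← inv_inv a, ← heq, mul_inv_rev, inv_inv]
      have hceq : c = a * l := by rw [h1]; group
      refine Set.disjoint_left.1 hdis hc (Set.mem_mul.2 ?_)
      refine ⟨a, Finset.mem_coe.2 ha, l, Finset.mem_coe.2 ?_, hceq.symm⟩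
      exact Finset.mem_union_left _ hl
    have hdis2 : ∀ j k : Bool, j ≠ k →
        Disjoint (((if j then Ω₁⁻¹ else Ω₂⁻¹ : Finset G)) : Set G)
          ((Λ : Set G) * ((if k then Ω₁⁻¹ else Ω₂⁻¹ : Finset G) : Set G)) := by
      intro j k hjk
      cases j <;> cases k
      · exact absurd rfl hjk
      · exact case2
      · exact case1
      · exact absurd rfl hjk
    obtain ⟨y, hy⟩ := hΛ Bool inferInstance inferInstance
      (fun b => if b then Ω₁⁻¹ else Ω₂⁻¹)
      (fun b => if b then ⟨x₁, hx₁⟩ else ⟨x₂, hx₂⟩) hdis2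
    refine ⟨(y : G → A), y.2, fun g hg => ?_, fun g hg => ?_⟩
    · have := hy true g⁻¹ (Finset.inv_mem_inv hg)
      simp only [hUdef, Set.mem_setOf_eq] at this
      change shift g⁻¹ (y : G → A) 1 = shift g⁻¹ x₁ 1 at this
      simpa only [shift, inv_inv, mul_one] using this
    · have := hy false g⁻¹ (Finset.inv_mem_inv hg)
      simp only [hUdef, Set.mem_setOf_eq] at this
      change shift g⁻¹ (y : G → A) 1 = shift g⁻¹ x₂ 1 at this
      simpa only [shift, inv_inv, mul_one] using this
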